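/- Let (g_k) be a real-valued discrete-time martingale adapted to a filtration, with g_0 constant and g_k = g_N for all k ≥ N. Define S(g) = (Σ_{k=0}^{N-1} (g_{k+1}-g_k)²)^{1/2}. If U : ℝ × ℝ≥0 → ℝ satisfies 2U(p,q) ≥ U(p+a, √(a²+q²)) + U(p-a, √(a²+q²)) for all p, q, a, and the martingale increments take only two equally likely values ±a conditionally (dyadic martingale), then E U(g_N, S(g)) ≤ U(g_0, 0). -/

import Mathlib

lemma sum_range_two_mul' (n : ℕ) (f : ℕ → ℝ) :
    ∑ i ∈ Finset.range (2 * n), f i = ∑ j ∈ Finset.range n, (f (2 * j) + f (2 * j + 1)) := by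
  induction n with
  | zero => simp
  | succ n ih =>
    have h : 2 * (n + 1) = (2 * n + 1) + 1 := by ring
    rw [h, Finset.sum_range_succ, Finset.sum_range_succ, ih, Finset.sum_range_succ]
    ring

lemma div_pow_succ (i j m : ℕ) (h : i / 2 = j) : i / 2 ^ (m + 1) = j / 2 ^ m := by
  rw [pow_succ, mul_comm, ← Nat.div_div_eq_div_mul, h]

/-- A dyadic martingale on `[0,1]` encoded by its values on dyadic intervals:
`g k i` is the value of the `k`-th term on the `i`-th dyadic interval of length `2 ^ (-k)`
(for `i < 2 ^ k`).  The martingale property says the value on an interval is the average of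
the values on its two halves; then the increments on the two halves are `±a` with equal
measure.  The square function at a leaf `i` of level `N` sums the squared increments along
the ancestors `i / 2 ^ (N - k)` of `i`. -/
theorem stmt14 (N : ℕ) (g : ℕ → ℕ → ℝ)
    (hmart : ∀ k i, g k i = (g (k + 1) (2 * i) + g (k + 1) (2 * i + 1)) / 2)
    (U : ℝ → ℝ → ℝ)
    (hU : ∀ p q a : ℝ,
      2 * U p q ≥
        U (p + a) (Real.sqrt (a ^ 2 + q ^ 2)) + U (p - a) (Real.sqrt (a ^ 2 + q ^ 2))) :
    (∑ i ∈ Finset.range (2 ^ N),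
        U (g N i)
          (Real.sqrt (∑ k ∈ Finset.range N,
            (g (k + 1) (i / 2 ^ (N - (k + 1))) - g k (i / 2 ^ (N - k))) ^ 2))) / 2 ^ N ≤
      U (g 0 0) 0 := by
  induction N with
  | zero => simp
  | succ N ih =>
    have key : (∑ i ∈ Finset.range (2 ^ (N + 1)),
        U (g (N + 1) i)
          (Real.sqrt (∑ k ∈ Finset.range (N + 1),
            (g (k + 1) (i / 2 ^ (N + 1 - (k + 1))) - g k (i / 2 ^ (N + 1 - k))) ^ 2)))
        ≤ 2 * ∑ i ∈ Finset.range (2 ^ N),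
        U (g N i)
          (Real.sqrt (∑ k ∈ Finset.range N,
            (g (k + 1) (i / 2 ^ (N - (k + 1))) - g k (i / 2 ^ (N - k))) ^ 2)) := by
      rw [show (2:ℕ) ^ (N + 1) = 2 * 2 ^ N from by ring, sum_range_two_mul', Finset.mul_sum]
      apply Finset.sum_le_sum
      intro j hj
      set p := g N j with hp
      set a := g (N + 1) (2 * j) - g N j with ha
      set S := ∑ k ∈ Finset.range N,
        (g (k + 1) (j / 2 ^ (N - (k + 1))) - g k (j / 2 ^ (N - k))) ^ 2 with hS
      have hS0 : 0 ≤ S := Finset.sum_nonneg fun _ _ => sq_nonneg _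
      have hq : Real.sqrt S ^ 2 = S := Real.sq_sqrt hS0
      have hga : g (N + 1) (2 * j) = p + a := by rw [ha]; ring
      have hgb : g (N + 1) (2 * j + 1) = p - a := by
        have h := hmart N j
        rw [ha, ← hp]
        linarith
      have hsum : ∀ i, i / 2 = j →
          ∑ k ∈ Finset.range (N + 1),
            (g (k + 1) (i / 2 ^ (N + 1 - (k + 1))) - g k (i / 2 ^ (N + 1 - k))) ^ 2
            = S + (g (N + 1) i - p) ^ 2 := by
        intro i hi
        rw [Finset.sum_range_succ]
        congr 1
        · rw [hS]
          apply Finset.sum_congr rfl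
          intro k hk
          have hk' : k < N := Finset.mem_range.mp hk
          have e1 : i / 2 ^ (N + 1 - (k + 1)) = j / 2 ^ (N - (k + 1)) := by
            rw [show N + 1 - (k + 1) = (N - (k + 1)) + 1 from by omega]
            exact div_pow_succ i j _ hi
          have e2 : i / 2 ^ (N + 1 - k) = j / 2 ^ (N - k) := by
            rw [show N + 1 - k = (N - k) + 1 from by omega]
            exact div_pow_succ i j _ hi
          rw [e1, e2]
        · simp [hi, hp]
      have ea : g (N + 1) (2 * j) - p = a := by rw [hga]; ring
      have eb : g (N + 1) (2 * j + 1) - p = -a := by rw [hgb]; ring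
      have h0 : (2 * j) / 2 = j := by omega
      have h1 : (2 * j + 1) / 2 = j := by omega
      rw [hsum _ h0, hsum _ h1, ea, eb, hga, hgb]
      have hsq : Real.sqrt (S + a ^ 2) = Real.sqrt (a ^ 2 + Real.sqrt S ^ 2) := by
        rw [hq, add_comm]
      have hsq' : Real.sqrt (S + (-a) ^ 2) = Real.sqrt (a ^ 2 + Real.sqrt S ^ 2) := by
        rw [neg_sq]; exact hsq
      rw [hsq, hsq']
      have := hU p (Real.sqrt S) a
      linarith
    have h2 : (0:ℝ) < 2 ^ N := by positivity
    calc (∑ i ∈ Finset.range (2 ^ (N + 1)),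
        U (g (N + 1) i)
          (Real.sqrt (∑ k ∈ Finset.range (N + 1),
            (g (k + 1) (i / 2 ^ (N + 1 - (k + 1))) - g k (i / 2 ^ (N + 1 - k))) ^ 2))) / 2 ^ (N + 1)
        ≤ (2 * ∑ i ∈ Finset.range (2 ^ N),
        U (g N i)
          (Real.sqrt (∑ k ∈ Finset.range N,
            (g (k + 1) (i / 2 ^ (N - (k + 1))) - g k (i / 2 ^ (N - k))) ^ 2))) / 2 ^ (N + 1) := by
          gcongr
      _ = (∑ i ∈ Finset.range (2 ^ N),
        U (g N i)
          (Real.sqrt (∑ k ∈ Finset.range N,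
            (g (k + 1) (i / 2 ^ (N - (k + 1))) - g k (i / 2 ^ (N - k))) ^ 2))) / 2 ^ N := by
          rw [pow_succ]; field_simp
      _ ≤ U (g 0 0) 0 := ih
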